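/- If u(x,t) = t^{-1/5} f(x t^{-1/5}) with f(y) = (1/120)(y₀² − y²)² extended by 0 for |y| ≥ y₀, then u is a weak solution of u_t = −(u u_{xxx})_x on the region where |x| < y₀ t^{1/5}, t > 0; i.e., on that region the pointwise identity ∂_t u + ∂_x(u ∂_x³ u) = 0 holds. -/

import Mathlib

open Real Filter

private lemma rpow_helper (τ : ℝ) (hτ : 0 < τ) (k : ℕ) (r : ℝ) (hr : -(k:ℝ)/5 = r) :
    (τ ^ (-(1:ℝ)/5)) ^ k = τ ^ r := by
  rw [← hr, ← Real.rpow_natCast (τ ^ (-(1:ℝ)/5)) k, ← Real.rpow_mul hτ.le]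
  congr 1
  ring

/-- The self-similar function u(x,t) = t^{-1/5} f(x t^{-1/5}), with
f(y) = (1/120)(y₀²−y²)² extended by zero, satisfies the thin film equation
u_t + (u u_{xxx})_x = 0 pointwise on {(x,t) : t > 0, |x| < y₀ t^{1/5}}. -/
theorem stmt_2 (y₀ : ℝ) (hy₀ : 0 < y₀) (f : ℝ → ℝ)
    (hf : ∀ y, f y = if |y| ≤ y₀ then (1/120) * (y₀^2 - y^2)^2 else 0)
    (u : ℝ → ℝ → ℝ)
    (hu : ∀ x t, u x t = t ^ (-(1:ℝ)/5) * f (x * t ^ (-(1:ℝ)/5))) :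
    ∀ x t : ℝ, 0 < t → |x| < y₀ * t ^ ((1:ℝ)/5) →
      deriv (fun τ => u x τ) t
        + deriv (fun ξ => u ξ t * iteratedDeriv 3 (fun ξ' => u ξ' t) ξ) x = 0 := by
  intro x t ht hx
  have ht' : t ≠ 0 := ht.ne'
  have hcpos : 0 < t ^ (-(1:ℝ)/5) := Real.rpow_pos_of_pos ht _
  have hone : t ^ ((1:ℝ)/5) * t ^ (-(1:ℝ)/5) = 1 := by
    rw [← Real.rpow_add ht]; norm_num
  -- spatial local polynomial formula
  have hloc : ∀ ξ : ℝ, |ξ| < y₀ * t ^ ((1:ℝ)/5) →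
      u ξ t = t ^ (-(1:ℝ)/5)*y₀^4/120 + (-((t ^ (-(1:ℝ)/5))^3*y₀^2)/60)*ξ^2
        + ((t ^ (-(1:ℝ)/5))^5/120)*ξ^4 := by
    intro ξ hξ
    have habs : |ξ * t ^ (-(1:ℝ)/5)| ≤ y₀ := by
      rw [abs_mul, abs_of_pos hcpos]
      have h2 : |ξ| * t ^ (-(1:ℝ)/5) < (y₀ * t ^ ((1:ℝ)/5)) * t ^ (-(1:ℝ)/5) :=
        mul_lt_mul_of_pos_right hξ hcpos
      rw [mul_assoc, hone, mul_one] at h2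
      exact h2.le
    rw [hu, hf, if_pos habs]
    ring
  -- derivatives of the spatial polynomial
  have d1 : ∀ ξ : ℝ, HasDerivAt (fun ξ : ℝ => t ^ (-(1:ℝ)/5)*y₀^4/120
      + (-((t ^ (-(1:ℝ)/5))^3*y₀^2)/60)*ξ^2 + ((t ^ (-(1:ℝ)/5))^5/120)*ξ^4)
      (-((t ^ (-(1:ℝ)/5))^3*y₀^2)/30*ξ + (t ^ (-(1:ℝ)/5))^5/30*ξ^3) ξ := by
    intro ξ
    have h := (((hasDerivAt_pow 2 ξ).const_mul (-((t ^ (-(1:ℝ)/5))^3*y₀^2)/60)).const_add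
      (t ^ (-(1:ℝ)/5)*y₀^4/120)).add ((hasDerivAt_pow 4 ξ).const_mul ((t ^ (-(1:ℝ)/5))^5/120))
    refine h.congr_deriv ?_
    push_cast
    ring
  have d2 : ∀ ξ : ℝ, HasDerivAt (fun ξ : ℝ =>
      -((t ^ (-(1:ℝ)/5))^3*y₀^2)/30*ξ + (t ^ (-(1:ℝ)/5))^5/30*ξ^3)
      (-((t ^ (-(1:ℝ)/5))^3*y₀^2)/30 + (t ^ (-(1:ℝ)/5))^5/10*ξ^2) ξ := by
    intro ξ
    have h := ((hasDerivAt_id ξ).const_mul (-((t ^ (-(1:ℝ)/5))^3*y₀^2)/30)).add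
      ((hasDerivAt_pow 3 ξ).const_mul ((t ^ (-(1:ℝ)/5))^5/30))
    refine h.congr_deriv ?_
    push_cast
    ring
  have d3 : ∀ ξ : ℝ, HasDerivAt (fun ξ : ℝ =>
      -((t ^ (-(1:ℝ)/5))^3*y₀^2)/30 + (t ^ (-(1:ℝ)/5))^5/10*ξ^2)
      ((t ^ (-(1:ℝ)/5))^5/5*ξ) ξ := by
    intro ξ
    have h := (((hasDerivAt_pow 2 ξ).const_mul ((t ^ (-(1:ℝ)/5))^5/10)).const_add
      (-((t ^ (-(1:ℝ)/5))^3*y₀^2)/30))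
    refine h.congr_deriv ?_
    push_cast
    ring
  have d4 : ∀ ξ : ℝ, HasDerivAt (fun ξ : ℝ => (t ^ (-(1:ℝ)/5))^5/5*ξ)
      ((t ^ (-(1:ℝ)/5))^5/5) ξ := by
    intro ξ
    simpa using (hasDerivAt_id ξ).const_mul ((t ^ (-(1:ℝ)/5))^5/5)
  -- eventual equalities near x
  have hopen : IsOpen {ξ : ℝ | |ξ| < y₀ * t ^ ((1:ℝ)/5)} :=
    isOpen_lt continuous_abs continuous_const
  have e0 : (fun ξ => u ξ t) =ᶠ[nhds x] (fun ξ : ℝ => t ^ (-(1:ℝ)/5)*y₀^4/120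
      + (-((t ^ (-(1:ℝ)/5))^3*y₀^2)/60)*ξ^2 + ((t ^ (-(1:ℝ)/5))^5/120)*ξ^4) := by
    filter_upwards [hopen.mem_nhds hx] with ξ hξ using hloc ξ hξ
  have hd1 : deriv (fun ξ : ℝ => t ^ (-(1:ℝ)/5)*y₀^4/120
      + (-((t ^ (-(1:ℝ)/5))^3*y₀^2)/60)*ξ^2 + ((t ^ (-(1:ℝ)/5))^5/120)*ξ^4)
      = fun ξ : ℝ => -((t ^ (-(1:ℝ)/5))^3*y₀^2)/30*ξ + (t ^ (-(1:ℝ)/5))^5/30*ξ^3 :=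
    funext fun ξ => (d1 ξ).deriv
  have hd2 : deriv (fun ξ : ℝ => -((t ^ (-(1:ℝ)/5))^3*y₀^2)/30*ξ + (t ^ (-(1:ℝ)/5))^5/30*ξ^3)
      = fun ξ : ℝ => -((t ^ (-(1:ℝ)/5))^3*y₀^2)/30 + (t ^ (-(1:ℝ)/5))^5/10*ξ^2 :=
    funext fun ξ => (d2 ξ).deriv
  have hd3 : deriv (fun ξ : ℝ => -((t ^ (-(1:ℝ)/5))^3*y₀^2)/30 + (t ^ (-(1:ℝ)/5))^5/10*ξ^2)
      = fun ξ : ℝ => (t ^ (-(1:ℝ)/5))^5/5*ξ :=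
    funext fun ξ => (d3 ξ).deriv
  have e1 := e0.deriv
  rw [hd1] at e1
  have e2 := e1.deriv
  rw [hd2] at e2
  have e3 := e2.deriv
  rw [hd3] at e3
  have hiter : iteratedDeriv 3 (fun ξ' => u ξ' t)
      = deriv (deriv (deriv (fun ξ' => u ξ' t))) := by
    rw [show (3:ℕ) = 2+1 from rfl, iteratedDeriv_succ, show (2:ℕ) = 1+1 from rfl,
      iteratedDeriv_succ, iteratedDeriv_one]
  have eprod : (fun ξ => u ξ t * iteratedDeriv 3 (fun ξ' => u ξ' t) ξ)
      =ᶠ[nhds x] (fun ξ : ℝ => (t ^ (-(1:ℝ)/5)*y₀^4/120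
        + (-((t ^ (-(1:ℝ)/5))^3*y₀^2)/60)*ξ^2 + ((t ^ (-(1:ℝ)/5))^5/120)*ξ^4)
        * ((t ^ (-(1:ℝ)/5))^5/5*ξ)) := by
    rw [hiter]
    exact e0.mul e3
  have hspace : deriv (fun ξ => u ξ t * iteratedDeriv 3 (fun ξ' => u ξ' t) ξ) x
      = (-((t ^ (-(1:ℝ)/5))^3*y₀^2)/30*x + (t ^ (-(1:ℝ)/5))^5/30*x^3)
          * ((t ^ (-(1:ℝ)/5))^5/5*x)
        + (t ^ (-(1:ℝ)/5)*y₀^4/120 + (-((t ^ (-(1:ℝ)/5))^3*y₀^2)/60)*x^2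
          + ((t ^ (-(1:ℝ)/5))^5/120)*x^4) * ((t ^ (-(1:ℝ)/5))^5/5) := by
    rw [eprod.deriv_eq]
    exact ((d1 x).mul (d4 x)).deriv
  -- time derivative
  have htev : (fun τ => u x τ) =ᶠ[nhds t] (fun τ : ℝ => (y₀^4/120)*τ^(-(1:ℝ)/5)
      + (-(y₀^2*x^2)/60)*τ^(-(3:ℝ)/5) + (x^4/120)*τ^(-(5:ℝ)/5)) := by
    have hpos : ∀ᶠ τ in nhds t, 0 < τ := eventually_gt_nhds ht
    have hcont : ContinuousAt (fun τ : ℝ => y₀ * τ ^ ((1:ℝ)/5)) t :=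
      continuousAt_const.mul (Real.continuousAt_rpow_const t _ (Or.inl ht'))
    have hlt : ∀ᶠ τ in nhds t, |x| < y₀ * τ ^ ((1:ℝ)/5) :=
      hcont.eventually (eventually_gt_nhds hx)
    filter_upwards [hpos, hlt] with τ hτ hτx
    have hcτ : 0 < τ ^ (-(1:ℝ)/5) := Real.rpow_pos_of_pos hτ _
    have honeτ : τ ^ ((1:ℝ)/5) * τ ^ (-(1:ℝ)/5) = 1 := by
      rw [← Real.rpow_add hτ]; norm_num
    have habs : |x * τ ^ (-(1:ℝ)/5)| ≤ y₀ := by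
      rw [abs_mul, abs_of_pos hcτ]
      have h2 : |x| * τ ^ (-(1:ℝ)/5) < (y₀ * τ ^ ((1:ℝ)/5)) * τ ^ (-(1:ℝ)/5) :=
        mul_lt_mul_of_pos_right hτx hcτ
      rw [mul_assoc, honeτ, mul_one] at h2
      exact h2.le
    rw [hu, hf, if_pos habs,
      ← rpow_helper τ hτ 3 (-(3:ℝ)/5) (by norm_num),
      ← rpow_helper τ hτ 5 (-(5:ℝ)/5) (by norm_num),
      ← rpow_helper τ hτ 1 (-(1:ℝ)/5) (by norm_num)]
    ring
  have htime : deriv (fun τ => u x τ) t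
      = (y₀^4/120)*(-(1:ℝ)/5 * t^(-(1:ℝ)/5-1))
        + (-(y₀^2*x^2)/60)*(-(3:ℝ)/5 * t^(-(3:ℝ)/5-1))
        + (x^4/120)*(-(5:ℝ)/5 * t^(-(5:ℝ)/5-1)) := by
    rw [htev.deriv_eq]
    exact ((((Real.hasDerivAt_rpow_const (p := -(1:ℝ)/5) (Or.inl ht')).const_mul
      (y₀^4/120)).add ((Real.hasDerivAt_rpow_const (p := -(3:ℝ)/5) (Or.inl ht')).const_mul
      (-(y₀^2*x^2)/60))).add ((Real.hasDerivAt_rpow_const (p := -(5:ℝ)/5)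
      (Or.inl ht')).const_mul (x^4/120))).deriv
  rw [htime, hspace,
    show (-(1:ℝ)/5-1) = -(6:ℝ)/5 by norm_num,
    show (-(3:ℝ)/5-1) = -(8:ℝ)/5 by norm_num,
    show (-(5:ℝ)/5-1) = -(10:ℝ)/5 by norm_num,
    ← rpow_helper t ht 6 (-(6:ℝ)/5) (by norm_num),
    ← rpow_helper t ht 8 (-(8:ℝ)/5) (by norm_num),
    ← rpow_helper t ht 10 (-(10:ℝ)/5) (by norm_num)]
  ring
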